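/- There exists a surjective group homomorphism Φ : Γ(d1, d2) → Γ(l1, l2) over PGL_2(K) such that, for every (α, A) ∈ Kˣ × GL_2(K) and any β, γ ∈ K with β^{l1} = α^{d2} and γ^{l2} = α^{2d2}, Φ sends the class of (α, A) in Γ(d1, d2) to the class of (β·γ, β^{−1}·A) in Γ(l1, l2) (this value being independent of the choices of β and γ). -/

import Mathlib

noncomputable section

open Matrix

variable (K : Type*) [Field K]

/-- The group homomorphism `Kˣ →* GL (Fin n) K` sending a unit of `K` to the corresponding
invertible scalar matrix. -/
def scalarHom (n : ℕ) : Kˣ →* GL (Fin n) K :=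
  Units.map (algebraMap K (Matrix (Fin n) (Fin n) K)).toMonoidHom

theorem scalarHom_mem_center (n : ℕ) (ζ : Kˣ) :
    scalarHom K n ζ ∈ Subgroup.center (GL (Fin n) K) := by
  rw [Subgroup.mem_center_iff]
  intro g
  refine Units.ext ?_
  simp only [Units.val_mul, scalarHom, Units.coe_map, RingHom.toMonoidHom_eq_coe,
    MonoidHom.coe_coe]
  exact (Algebra.commutes (ζ : K) (g : Matrix (Fin n) (Fin n) K)).symm

/-- `μ_d`: the central subgroup of `GL (Fin n) K` consisting of scalar matrices `ζ • 1`
with `ζ ^ d = 1`. -/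
def muGL (n d : ℕ) : Subgroup (GL (Fin n) K) :=
  (rootsOfUnity d K).map (scalarHom K n)

theorem muGL_le_center (n d : ℕ) :
    muGL K n d ≤ Subgroup.center (GL (Fin n) K) := by
  rintro x ⟨ζ, -, rfl⟩
  exact scalarHom_mem_center K n ζ

instance muGL_normal (n d : ℕ) : (muGL K n d).Normal := by
  constructor
  intro x hx g
  have h := Subgroup.mem_center_iff.mp (muGL_le_center K n d hx) g
  have hg : g * x * g⁻¹ = x := by rw [h, mul_inv_cancel_right]
  rwa [hg]

/-- The subgroup `Z = Kˣ·I` of all invertible scalar matrices in `GL (Fin n) K`. -/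
def scalarSub (n : ℕ) : Subgroup (GL (Fin n) K) := (scalarHom K n).range

instance scalarSub_normal (n : ℕ) : (scalarSub K n).Normal := by
  constructor
  intro x hx g
  obtain ⟨ζ, rfl⟩ := hx
  have h := Subgroup.mem_center_iff.mp (scalarHom_mem_center K n ζ) g
  have hg : g * scalarHom K n ζ * g⁻¹ = scalarHom K n ζ := by rw [h, mul_inv_cancel_right]
  rw [hg]
  exact ⟨ζ, rfl⟩

/-- `PGL_n(K) = GL_n(K) / Z` where `Z` is the subgroup of invertible scalar matrices. -/
abbrev PGL (n : ℕ) := GL (Fin n) K ⧸ scalarSub K n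

theorem muGL_le_scalarSub (n d : ℕ) : muGL K n d ≤ scalarSub K n :=
  Subgroup.map_le_range _ _

/-- The natural projection `GL_n(K)/μ_d → PGL_n(K)`. -/
def projToPGL (n d : ℕ) : (GL (Fin n) K ⧸ muGL K n d) →* PGL K n :=
  QuotientGroup.map _ _ (MonoidHom.id _)
    (fun x hx => by simpa using muGL_le_scalarSub K n d hx)

/-- The embedding `i : Kˣ × Kˣ →* Kˣ × GL₂(K)`, `(x₁, x₂) ↦ (x₂/x₁, x₁·I₂)`. -/
def iEmb : Kˣ × Kˣ →* Kˣ × GL (Fin 2) K :=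
  ((MonoidHom.snd Kˣ Kˣ) * (MonoidHom.fst Kˣ Kˣ)⁻¹).prod
    ((scalarHom K 2).comp (MonoidHom.fst Kˣ Kˣ))

/-- The central subgroup `i(μ_a × μ_b)` of `Kˣ × GL₂(K)`. -/
def muGamma (a b : ℕ) : Subgroup (Kˣ × GL (Fin 2) K) :=
  ((rootsOfUnity a K).prod (rootsOfUnity b K)).map (iEmb K)

theorem muGamma_le_center (a b : ℕ) :
    muGamma K a b ≤ Subgroup.center (Kˣ × GL (Fin 2) K) := by
  rintro x ⟨⟨x1, x2⟩, -, rfl⟩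
  rw [Subgroup.mem_center_iff]
  intro g
  have h2 := Subgroup.mem_center_iff.mp (scalarHom_mem_center K 2 x1) g.2
  refine Prod.ext ?_ ?_
  · simpa [iEmb] using mul_comm g.1 (x2 * x1⁻¹)
  · simpa [iEmb] using h2

instance muGamma_normal (a b : ℕ) : (muGamma K a b).Normal := by
  constructor
  intro x hx g
  have h := Subgroup.mem_center_iff.mp (muGamma_le_center K a b hx) g
  have hg : g * x * g⁻¹ = x := by rw [h, mul_inv_cancel_right]
  rwa [hg]

/-- The group `Γ(a, b) = (Kˣ × GL₂(K)) / i(μ_a × μ_b)`. -/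
abbrev Gamma (a b : ℕ) := (Kˣ × GL (Fin 2) K) ⧸ muGamma K a b

/-- The homomorphism `Kˣ × GL₂(K) →* PGL₂(K)`, `(α, A) ↦ [A]`. -/
def sndPGL : (Kˣ × GL (Fin 2) K) →* PGL K 2 :=
  (QuotientGroup.mk' (scalarSub K 2)).comp (MonoidHom.snd Kˣ (GL (Fin 2) K))

theorem muGamma_le_ker (a b : ℕ) : muGamma K a b ≤ (sndPGL K).ker := by
  rintro x ⟨⟨x1, x2⟩, -, rfl⟩
  rw [MonoidHom.mem_ker]
  simp only [sndPGL, iEmb, MonoidHom.comp_apply, MonoidHom.prod_apply]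
  rw [QuotientGroup.mk'_apply, QuotientGroup.eq_one_iff]
  exact ⟨x1, rfl⟩

/-- The natural homomorphism `Γ(a, b) →* PGL₂(K)` descending `(α, A) ↦ [A]`. -/
def GammaToPGL (a b : ℕ) : Gamma K a b →* PGL K 2 :=
  QuotientGroup.lift (muGamma K a b) (sndPGL K)
    (fun _ hx => MonoidHom.mem_ker.mp (muGamma_le_ker K a b hx))

/-- Existence of `n`-th roots of units in an algebraically closed field. -/
lemma exists_unit_pow_eq {K : Type*} [Field K] [IsAlgClosed K] (n : ℕ) (hn : 0 < n) (a : Kˣ) :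
    ∃ b : Kˣ, b ^ n = a := by
  obtain ⟨z, hz⟩ := IsAlgClosed.exists_pow_nat_eq (a : K) hn
  have hz0 : z ≠ 0 := fun h => by
    apply a.ne_zero; rw [← hz, h, zero_pow hn.ne']
  exact ⟨Units.mk0 z hz0, Units.ext (by simpa using hz)⟩

/-- Key coherence lemma: the class of `(β·γ, β⁻¹·A)` in `Γ(l₁,l₂)` does not depend on the
choice of the roots `β`, `γ`. -/
lemma key_coherence {K : Type*} [Field K] (l1 l2 d2 : ℕ)
    (α β γ β' γ' : Kˣ) (A : GL (Fin 2) K)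
    (hβ : β ^ l1 = α ^ d2) (hγ : γ ^ l2 = α ^ (2 * d2))
    (hβ' : β' ^ l1 = α ^ d2) (hγ' : γ' ^ l2 = α ^ (2 * d2)) :
    (QuotientGroup.mk (β * γ, scalarHom K 2 β⁻¹ * A) : Gamma K l1 l2) =
      QuotientGroup.mk (β' * γ', scalarHom K 2 β'⁻¹ * A) := by
  rw [QuotientGroup.eq]
  refine ⟨(β * β'⁻¹, γ' * γ⁻¹), ⟨?_, ?_⟩, ?_⟩
  · show β * β'⁻¹ ∈ rootsOfUnity l1 K
    rw [mem_rootsOfUnity, mul_pow, hβ, inv_pow, hβ', mul_inv_cancel]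
  · show γ' * γ⁻¹ ∈ rootsOfUnity l2 K
    rw [mem_rootsOfUnity, mul_pow, hγ', inv_pow, hγ, mul_inv_cancel]
  · have hc := Subgroup.mem_center_iff.mp (scalarHom_mem_center K 2 (β * β'⁻¹)) A
    refine Prod.ext ?_ ?_
    · show (γ' * γ⁻¹) * (β * β'⁻¹)⁻¹ = (β * γ)⁻¹ * (β' * γ')
      rw [Units.ext_iff]
      push_cast
      field_simp
    · show scalarHom K 2 (β * β'⁻¹) = (scalarHom K 2 β⁻¹ * A)⁻¹ * (scalarHom K 2 β'⁻¹ * A)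
      rw [_root_.mul_inv_rev, _root_.map_inv, inv_inv, _root_.map_mul, _root_.map_inv]
      calc scalarHom K 2 β * (scalarHom K 2 β')⁻¹
          = A⁻¹ * (scalarHom K 2 β * (scalarHom K 2 β')⁻¹ * A) := by
            rw [← _root_.map_inv, ← _root_.map_mul, ← hc, _root_.map_mul, _root_.map_inv]; group
        _ = A⁻¹ * scalarHom K 2 β * ((scalarHom K 2 β')⁻¹ * A) := by group

/-- The homomorphism `Φ` of Remark 4.12: a surjective homomorphism
`Γ(d₁, d₂) → Γ(l₁, l₂)` over `PGL₂(K)` sending the class of `(α, A)` to the class of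
`(β·γ, β⁻¹·A)` for any `β, γ` with `β^{l₁} = α^{d₂}` and `γ^{l₂} = α^{2d₂}`. -/
theorem exists_surjective_hom_Gamma_over_PGL
    {K : Type*} [Field K] [IsAlgClosed K]
    (d1 d2 l1 l2 : ℕ) (hd1 : 0 < d1) (hd2 : 0 < d2)
    (hl1 : (l1 : ℤ) = 2 * (d1 : ℤ) - (d2 : ℤ)) (hl2 : (l2 : ℤ) = 2 * (d2 : ℤ) - (d1 : ℤ))
    (hl1' : 4 ≤ l1) (hl2' : 4 ≤ l2)
    (hchar : ¬ (ringChar K ∣ 2 * l1 * l2)) :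
    ∃ Φ : Gamma K d1 d2 →* Gamma K l1 l2,
      Function.Surjective Φ ∧
      (GammaToPGL K l1 l2).comp Φ = GammaToPGL K d1 d2 ∧
      ∀ (α β γ : Kˣ) (A : GL (Fin 2) K),
        β ^ l1 = α ^ d2 → γ ^ l2 = α ^ (2 * d2) →
        Φ (QuotientGroup.mk (α, A)) = QuotientGroup.mk (β * γ, scalarHom K 2 β⁻¹ * A) := by
  have e1 : d2 + l1 = 2 * d1 := by omega
  have e2 : d1 + l2 = 2 * d2 := by omega
  have e3 : 2 * l1 + l2 = 3 * d1 := by omega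
  have hl1pos : 0 < l1 := by omega
  have hl2pos : 0 < l2 := by omega
  choose β hβ using fun α : Kˣ => exists_unit_pow_eq l1 hl1pos (α ^ d2)
  choose γ hγ using fun α : Kˣ => exists_unit_pow_eq l2 hl2pos (α ^ (2 * d2))
  set f : Kˣ × GL (Fin 2) K → Gamma K l1 l2 :=
    fun p => QuotientGroup.mk (β p.1 * γ p.1, scalarHom K 2 (β p.1)⁻¹ * p.2) with hf
  have hfval : ∀ (α b c : Kˣ) (A : GL (Fin 2) K), b ^ l1 = α ^ d2 → c ^ l2 = α ^ (2 * d2) →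
      f (α, A) = QuotientGroup.mk (b * c, scalarHom K 2 b⁻¹ * A) :=
    fun α b c A hb hc => key_coherence l1 l2 d2 α (β α) (γ α) b c A (hβ α) (hγ α) hb hc
  have fmul : ∀ x y : Kˣ × GL (Fin 2) K, f (x * y) = f x * f y := by
    rintro ⟨α, A⟩ ⟨α', A'⟩
    have hb : (β α * β α') ^ l1 = (α * α') ^ d2 := by rw [mul_pow, hβ, hβ, mul_pow]
    have hc : (γ α * γ α') ^ l2 = (α * α') ^ (2 * d2) := by rw [mul_pow, hγ, hγ, mul_pow]
    have h1 : f ((α, A) * (α', A')) = f (α * α', A * A') := rfl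
    rw [h1, hfval (α * α') (β α * β α') (γ α * γ α') (A * A') hb hc]
    show _ = (QuotientGroup.mk _ : Gamma K l1 l2) * QuotientGroup.mk _
    rw [← QuotientGroup.mk_mul]
    congr 1
    have hc2 := Subgroup.mem_center_iff.mp (scalarHom_mem_center K 2 (β α')⁻¹) A
    rw [_root_.map_inv] at hc2
    refine Prod.ext ?_ ?_
    · show β α * β α' * (γ α * γ α') = β α * γ α * (β α' * γ α')
      rw [mul_mul_mul_comm]
    · show scalarHom K 2 (β α * β α')⁻¹ * (A * A') =
        scalarHom K 2 (β α)⁻¹ * A * (scalarHom K 2 (β α')⁻¹ * A')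
      rw [mul_inv, _root_.map_mul, _root_.map_inv, _root_.map_inv]
      calc (scalarHom K 2 (β α))⁻¹ * (scalarHom K 2 (β α'))⁻¹ * (A * A')
          = (scalarHom K 2 (β α))⁻¹ * ((scalarHom K 2 (β α'))⁻¹ * A) * A' := by group
        _ = (scalarHom K 2 (β α))⁻¹ * (A * (scalarHom K 2 (β α'))⁻¹) * A' := by rw [← hc2]
        _ = _ := by group
  let F : Kˣ × GL (Fin 2) K →* Gamma K l1 l2 := MonoidHom.mk' f fmul
  have hker : ∀ x ∈ muGamma K d1 d2, F x = 1 := by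
    rintro _ ⟨⟨x1, x2⟩, ⟨h1, h2⟩, rfl⟩
    replace h1 : x1 ^ d1 = 1 := (mem_rootsOfUnity d1 x1).mp h1
    replace h2 : x2 ^ d2 = 1 := (mem_rootsOfUnity d2 x2).mp h2
    have hF : F (iEmb K (x1, x2)) = f (x2 * x1⁻¹, scalarHom K 2 x1) := rfl
    set α := x2 * x1⁻¹ with hα
    rw [hF, hf]
    rw [QuotientGroup.eq_one_iff]
    refine ⟨((β α)⁻¹ * x1, γ α * x1), ⟨?_, ?_⟩, ?_⟩
    · show (β α)⁻¹ * x1 ∈ rootsOfUnity l1 K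
      rw [mem_rootsOfUnity, mul_pow, inv_pow, hβ, hα, mul_pow, h2, one_mul, inv_pow, inv_inv,
        ← pow_add, e1, mul_comm 2 d1, pow_mul, h1, one_pow]
    · have hx1l2 : x1 ^ l2 = x1 ^ (2 * d2) := by rw [← one_mul (x1 ^ l2), ← h1, ← pow_add, e2]
      show γ α * x1 ∈ rootsOfUnity l2 K
      rw [mem_rootsOfUnity, mul_pow, hγ, hx1l2, ← mul_pow, hα, inv_mul_cancel_right,
        mul_comm 2 d2, pow_mul, h2, one_pow]
    · refine Prod.ext ?_ ?_
      · show γ α * x1 * ((β α)⁻¹ * x1)⁻¹ = β α * γ α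
        rw [Units.ext_iff]
        push_cast
        field_simp
      · show scalarHom K 2 ((β α)⁻¹ * x1) = scalarHom K 2 (β α)⁻¹ * scalarHom K 2 x1
        rw [_root_.map_mul, _root_.map_inv]
  replace hker : muGamma K d1 d2 ≤ F.ker := fun x hx => MonoidHom.mem_ker.mpr (hker x hx)
  refine ⟨QuotientGroup.lift (muGamma K d1 d2) F hker, ?_, ?_, ?_⟩
  · intro q
    obtain ⟨⟨δ, B⟩, rfl⟩ := QuotientGroup.mk_surjective q
    obtain ⟨b, hb⟩ := exists_unit_pow_eq (3 * d1) (by omega) (δ ^ l2)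
    obtain ⟨a, ha⟩ := exists_unit_pow_eq d2 hd2 (b ^ l1)
    have hab : a ^ d2 = b ^ l1 := ha
    have hbl : b ^ l1 = a ^ d2 := ha.symm
    have hcgoal : (δ * b⁻¹) ^ l2 = a ^ (2 * d2) := by
      calc (δ * b⁻¹) ^ l2 = δ ^ l2 * (b ^ l2)⁻¹ := by rw [mul_pow, inv_pow]
        _ = b ^ (2 * l1 + l2) * (b ^ l2)⁻¹ := by rw [← hb, ← e3]
        _ = b ^ (2 * l1) := by rw [pow_add, mul_inv_cancel_right]
        _ = (b ^ l1) ^ 2 := by rw [← pow_mul, mul_comm]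
        _ = (a ^ d2) ^ 2 := by rw [hab]
        _ = a ^ (2 * d2) := by rw [← pow_mul, mul_comm]
    refine ⟨QuotientGroup.mk (a, scalarHom K 2 b * B), ?_⟩
    rw [QuotientGroup.lift_mk]
    show f (a, scalarHom K 2 b * B) = _
    rw [hfval a b (δ * b⁻¹) (scalarHom K 2 b * B) hbl hcgoal]
    congr 1
    refine Prod.ext ?_ ?_
    · show b * (δ * b⁻¹) = δ
      rw [mul_comm δ, mul_inv_cancel_left]
    · show scalarHom K 2 b⁻¹ * (scalarHom K 2 b * B) = B
      rw [_root_.map_inv, inv_mul_cancel_left]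
  · refine QuotientGroup.monoidHom_ext _ ?_
    ext ⟨α, A⟩
    obtain ⟨b, hb⟩ := exists_unit_pow_eq l1 hl1pos (α ^ d2)
    obtain ⟨c, hc⟩ := exists_unit_pow_eq l2 hl2pos (α ^ (2 * d2))
    have : (QuotientGroup.lift (muGamma K d1 d2) F hker) (QuotientGroup.mk (α, A)) =
        QuotientGroup.mk (b * c, scalarHom K 2 b⁻¹ * A) := by
      rw [QuotientGroup.lift_mk]
      exact hfval α b c A hb hc
    simp only [MonoidHom.comp_apply, MonoidHom.coe_comp, Function.comp_apply,
      QuotientGroup.coe_mk', this]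
    show GammaToPGL K l1 l2 _ = GammaToPGL K d1 d2 (QuotientGroup.mk (α, A))
    simp only [GammaToPGL, QuotientGroup.lift_mk]
    show sndPGL K (b * c, scalarHom K 2 b⁻¹ * A) = sndPGL K (α, A)
    simp only [sndPGL, MonoidHom.comp_apply, MonoidHom.coe_snd, QuotientGroup.mk'_apply]
    rw [QuotientGroup.eq]
    refine ⟨b, ?_⟩
    have hcA := Subgroup.mem_center_iff.mp (scalarHom_mem_center K 2 b) A
    show scalarHom K 2 b = (scalarHom K 2 b⁻¹ * A)⁻¹ * A
    rw [_root_.map_inv, _root_.mul_inv_rev, inv_inv, mul_assoc, ← hcA]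
    group
  · intro α b c A hb hc
    rw [QuotientGroup.lift_mk]
    exact hfval α b c A hb hc

end
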